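/- Let F_q be a finite field, and let ω ≥ 1, r ≥ 0 be integers with n = ω + r. Let b_1, …, b_{ω-1} ∈ F_q^n, and let 𝒜' and 𝒜'' be finite families where each A ∈ 𝒜' ∪ 𝒜'' carries r vectors f^A_e ∈ F_q^n (e ∈ A, |A| = r), and where for each A ∈ 𝒜'' the n-1 projected vectors b_1',…,b_{ω-1}',(f^A_e)' (e∈A) are linearly independent in F_q^{n-1}. Let h ∈ F_q^{n-1} satisfy h ∉ ⋃_{A∈𝒜'} ( ⟨b_1',…,b_{ω-1}'⟩ + ⟨(f^A_e)' : e∈A⟩ ). For each A ∈ 𝒜'', let (α^A, β^A) ∈ F_q^{n-1} be the unique coefficients with h = Σ_{i=1}^{ω-1} α^A_i b_i' + Σ_{e∈A} β^A_e (f^A_e)', and set θ_A = Σ_{i=1}^{ω-1} α^A_i b_{i,n} + Σ_{e∈A} β^A_e f^A_{e,n}. If θ ∈ F_q is nonzero and θ·θ_A ≠ -1 for all A ∈ 𝒜'', then the vector k = θ·h satisfies k ∉ ⋃_{A∈𝒜'} ( ⟨b_1',…,b_{ω-1}'⟩ + ⟨(f^A_e)' : e∈A⟩ ) and k ∉ K_A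 for every A ∈ 𝒜''. -/
import Mathlib


/-- The vector consisting of the first `n - 1` components of `v`. -/
def projv {F : Type*} [Field F] {n : ℕ} (v : Fin n → F) : Fin (n - 1) → F :=
  fun i => v (Fin.castLE (Nat.sub_le n 1) i)

/-- The last component of `v`. -/
def lastc {F : Type*} [Field F] {n : ℕ} (hn : 0 < n) (v : Fin n → F) : F :=
  v ⟨n - 1, Nat.sub_lt hn Nat.one_pos⟩

/-- The compressed vector `v(k) = v' + v_n • k`, i.e. `[I_{n-1} k] · v`. -/
def cvec {F : Type*} [Field F] {n : ℕ} (hn : 0 < n) (k : Fin (n - 1) → F)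
    (v : Fin n → F) : Fin (n - 1) → F :=
  fun i => projv v i + lastc hn v * k i

/-- The set `K_A` of forbidden compression vectors: all
`Σ αᵢ bᵢ' + Σ βₑ fₑ'` over coefficient tuples `(α, β)` with
`Σ αᵢ b_{i,n} + Σ βₑ f_{e,n} = -1`. -/
def KSet {F : Type*} [Field F] {n : ℕ} {ι κ : Type*} [Fintype ι] [Fintype κ]
    (hn : 0 < n) (b : ι → Fin n → F) (f : κ → Fin n → F) : Set (Fin (n - 1) → F) :=
  { x | ∃ (α : ι → F) (β : κ → F),
      ((∑ i, α i * lastc hn (b i)) + ∑ e, β e * lastc hn (f e) = -1) ∧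
      x = (∑ i, α i • projv (b i)) + ∑ e, β e • projv (f e) }

/-- Verification of Algorithm 1: if `h` avoids `⋃_{A ∈ 𝒜'}(⟨bᵢ'⟩ + ⟨(f^A_e)'⟩)`,
`(α^A, β^A)` are the coefficients of `h` in the basis `bᵢ', (f^A_e)'` for each
`A ∈ 𝒜''`, `θ_A` is the corresponding last-component combination, and `θ ≠ 0`
satisfies `θ·θ_A ≠ -1` for all `A ∈ 𝒜''`, then `k = θ·h` avoids both
`⋃_{A ∈ 𝒜'}(⟨bᵢ'⟩ + ⟨(f^A_e)'⟩)` and every `K_A`, `A ∈ 𝒜''`. -/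
theorem algorithm1_verification (F : Type*) [Field F] [Fintype F] (ω r : ℕ)
    (hω : 1 ≤ ω) (b : Fin (ω - 1) → Fin (ω + r) → F)
    (ι' : Type*) [Fintype ι'] (f' : ι' → Fin r → Fin (ω + r) → F)
    (ι'' : Type*) [Fintype ι''] (f'' : ι'' → Fin r → Fin (ω + r) → F)
    (hind : ∀ A : ι'', LinearIndependent F
      (Sum.elim (fun i => projv (b i)) (fun e => projv (f'' A e))))
    (h : Fin (ω + r - 1) → F)
    (hh : h ∉ ⋃ A : ι',
      (↑(Submodule.span F (Set.range fun i => projv (b i)) ⊔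
         Submodule.span F (Set.range fun e => projv (f' A e))) :
        Set (Fin (ω + r - 1) → F)))
    (α : ι'' → Fin (ω - 1) → F) (β : ι'' → Fin r → F)
    (hαβ : ∀ A : ι'',
      h = (∑ i, α A i • projv (b i)) + ∑ e, β A e • projv (f'' A e))
    (θ : F) (hθ : θ ≠ 0)
    (hθA : ∀ A : ι'',
      θ * ((∑ i, α A i * lastc (by omega : 0 < ω + r) (b i)) +
            ∑ e, β A e * lastc (by omega : 0 < ω + r) (f'' A e)) ≠ -1) :
    (θ • h ∉ ⋃ A : ι',
      (↑(Submodule.span F (Set.range fun i => projv (b i)) ⊔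
         Submodule.span F (Set.range fun e => projv (f' A e))) :
        Set (Fin (ω + r - 1) → F))) ∧
    ∀ A : ι'', θ • h ∉ KSet (by omega : 0 < ω + r) b (f'' A) := by
  constructor
  · intro hk
    apply hh
    simp only [Set.mem_iUnion] at hk ⊢
    obtain ⟨A, hA⟩ := hk
    refine ⟨A, ?_⟩
    have hh' : h = θ⁻¹ • (θ • h) := by rw [smul_smul, inv_mul_cancel₀ hθ, one_smul]
    rw [hh']
    exact Submodule.smul_mem _ _ hA
  · intro A hk
    obtain ⟨α', β', hsum, hrep⟩ := hk
    set g := Sum.elim (fun i => projv (b i)) (fun e => projv (f'' A e)) with hg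
    have h1 : θ • h = ∑ s : Fin (ω-1) ⊕ Fin r, Sum.elim α' β' s • g s := by
      rw [hrep, Fintype.sum_sum_type]; simp [hg]
    have h2 : θ • h = ∑ s : Fin (ω-1) ⊕ Fin r, (θ * Sum.elim (α A) (β A) s) • g s := by
      rw [hαβ A, smul_add, Finset.smul_sum, Finset.smul_sum, Fintype.sum_sum_type]
      simp [smul_smul, hg]
    have heq : ∀ s, Sum.elim α' β' s = θ * Sum.elim (α A) (β A) s := by
      have hz := Fintype.linearIndependent_iff.mp (hind A)
        (fun s => Sum.elim α' β' s - θ * Sum.elim (α A) (β A) s) ?_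
      · exact fun s => sub_eq_zero.mp (hz s)
      · simp only [sub_smul]
        rw [Finset.sum_sub_distrib, ← h1, ← h2, sub_self]
    apply hθA A
    rw [← hsum]
    have hα : ∀ i, α' i = θ * α A i := fun i => heq (.inl i)
    have hβ : ∀ e, β' e = θ * β A e := fun e => heq (.inr e)
    rw [mul_add, Finset.mul_sum, Finset.mul_sum]
    simp only [hα, hβ, mul_assoc]
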